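/- Let n be a composite integer with n ≥ 14 and let d be the largest divisor of n satisfying d ≤ √(2n) - 1. Then d + 1 does not divide n. -/
import Mathlib


/-- For composite n ≥ 14, if d is the largest divisor of n with d ≤ √(2n) - 1,
then d + 1 does not divide n. -/
theorem stmt_14 (n : ℕ) (hn : 14 ≤ n) (hnp : ¬ n.Prime)
    (d : ℕ) (hdvd : d ∣ n) (hdle : (d : ℝ) ≤ Real.sqrt (2 * (n : ℝ)) - 1)
    (hmax : ∀ e : ℕ, e ∣ n → (e : ℝ) ≤ Real.sqrt (2 * (n : ℝ)) - 1 → e ≤ d) :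
    ¬ (d + 1) ∣ n := by
  intro h
  have hn0 : 0 < n := by omega
  have hne : ¬ ((d:ℝ) + 1 ≤ Real.sqrt (2 * (n:ℝ)) - 1) := by
    intro hle
    have := hmax (d + 1) h (by push_cast; linarith)
    omega
  have hcop : Nat.Coprime d (d + 1) := by simp [Nat.Coprime, Nat.gcd_comm, Nat.succ_sub_one]
  have hdd : d * (d + 1) ∣ n := hcop.mul_dvd_of_dvd_of_dvd hdvd h
  have hle : d * (d + 1) ≤ n := Nat.le_of_dvd hn0 hdd
  have hs0 : (0:ℝ) ≤ Real.sqrt (2 * (n:ℝ)) := Real.sqrt_nonneg _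
  have hs2 : Real.sqrt (2 * (n:ℝ)) ^ 2 = 2 * (n:ℝ) := Real.sq_sqrt (by positivity)
  have hR : (d:ℝ) * ((d:ℝ) + 1) ≤ (n:ℝ) := by exact_mod_cast hle
  have hn14 : (14:ℝ) ≤ (n:ℝ) := by exact_mod_cast hn
  push_neg at hne
  set s := Real.sqrt (2 * (n:ℝ)) with hs
  have hsp : (5:ℝ) < s := by nlinarith
  have h1 : (0:ℝ) < (d:ℝ) + 2 - s := by linarith
  nlinarith [hR, hs2, hn14, mul_pos h1 h1, mul_pos h1 (by linarith : (0:ℝ) < s),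
    sq_nonneg ((n:ℝ) - 14), mul_pos h1 (by linarith : (0:ℝ) < (d:ℝ) + 1)]
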